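/- Consider biased majority dynamics on a G(n,p) random graph with an arbitrary initial partition V = C₁ ∪ C₂, and set Δ = | |C_{1,0}| − |C_{2,0}| |/2. Let D > 0 and 𝒟 > 0 be arbitrary constants and suppose (log n)/n ≤ p ≤ 1/4 and Δ ≤ 10/p. Then there is a constant Ĉ_{D,𝒟} > 0 such that for all sufficiently large n, if Δ ≥ (1/√p)·exp(Ĉ_{D,𝒟}·√(log(1/p))), then P( | |C_{1,1}| − E[|C_{1,1}|] | ≥ D·√(pn)·Δ ) ≤ 1/√(np(1−p)) + 𝒟·p·Δ. -/

import Mathlib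

open MeasureTheory ProbabilityTheory Finset

noncomputable section

namespace MD

/-- Bernoulli measure on `Bool` with parameter `p` (`true` with probability `p`). -/
def bern (p : ℝ) : Measure Bool :=
  (ENNReal.ofReal p) • Measure.dirac true + (ENNReal.ofReal (1 - p)) • Measure.dirac false

instance bern_finite (p : ℝ) : IsFiniteMeasure (bern p) := by
  constructor
  simp only [bern, Measure.coe_add, Pi.add_apply, Measure.smul_apply, smul_eq_mul,
    measure_univ, mul_one]
  exact ENNReal.add_lt_top.mpr ⟨ENNReal.ofReal_lt_top, ENNReal.ofReal_lt_top⟩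

/-- The Erdős–Rényi `G(n,p)` measure on graphs over the vertex set `Fin n`: each
unordered pair of vertices is independently an edge with probability `p`. -/
def gnp (n : ℕ) (p : ℝ) : Measure (Sym2 (Fin n) → Bool) :=
  Measure.pi fun _ => bern p

variable {n : ℕ}

/-- Adjacency in the sampled graph. -/
def Adj (ω : Sym2 (Fin n) → Bool) (u v : Fin n) : Prop :=
  u ≠ v ∧ ω s(u, v) = true

instance (ω : Sym2 (Fin n) → Bool) (u v : Fin n) : Decidable (Adj ω u v) :=
  inferInstanceAs (Decidable (u ≠ v ∧ ω s(u, v) = true))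

/-- The neighbourhood of `v` in the sampled graph. -/
def nbhd (ω : Sym2 (Fin n) → Bool) (v : Fin n) : Finset (Fin n) :=
  univ.filter fun u => Adj ω v u

/-- Majority dynamics: the colour of each vertex on each day (`true` = colour 1),
started from the initial colouring `init`.  On day `t+1` a vertex adopts the colour
held by the majority of its neighbours on day `t`, keeping its colour on a tie. -/
def colour (init : Fin n → Bool) (ω : Sym2 (Fin n) → Bool) : ℕ → Fin n → Bool
  | 0, v => init v
  | t + 1, v =>
      let a := ((nbhd ω v).filter fun u => colour init ω t u = true).card
      let b := ((nbhd ω v).filter fun u => colour init ω t u = false).card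
      if b < a then true
      else if a < b then false
      else colour init ω t v

/-- `C_{1,t}`: the vertices of colour 1 on day `t`, given the initial colour-1 class `C1`
(the initial colour-2 class being its complement). -/
def C1t (C1 : Finset (Fin n)) (ω : Sym2 (Fin n) → Bool) (t : ℕ) : Finset (Fin n) :=
  univ.filter fun v => colour (fun x => decide (x ∈ C1)) ω t v = true

/-- `C_{2,t}`: the vertices of colour 2 on day `t`. -/
def C2t (C1 : Finset (Fin n)) (ω : Sym2 (Fin n) → Bool) (t : ℕ) : Finset (Fin n) :=
  univ.filter fun v => colour (fun x => decide (x ∈ C1)) ω t v = false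

/-- Biased majority dynamics: on day `t+1` a vertex `v` gets colour 1 (`true`) iff
`|Γ(v) ∩ C_{1,t}| - |Γ(v) ∩ C_{2,t}| + (1/2)·1[v ∈ C_{1,t}] - (1/2)·1[v ∈ C_{2,t}] ≥ -1`. -/
def bcolour (C1 : Finset (Fin n)) (ω : Sym2 (Fin n) → Bool) : ℕ → Fin n → Bool
  | 0, v => decide (v ∈ C1)
  | t + 1, v =>
      let a : ℤ := ((nbhd ω v).filter fun u => bcolour C1 ω t u = true).card
      let b : ℤ := ((nbhd ω v).filter fun u => bcolour C1 ω t u = false).card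
      decide (-2 ≤ 2 * a - 2 * b + (if bcolour C1 ω t v = true then 1 else -1))

/-- `|C_{1,t}|` for biased majority dynamics. -/
def bC1card (C1 : Finset (Fin n)) (ω : Sym2 (Fin n) → Bool) (t : ℕ) : ℕ :=
  (univ.filter fun v => bcolour C1 ω t v = true).card

/-! ### Auxiliary framework: weighted sums over `ι → Bool` and a read-2 Cauchy–Schwarz
(Finner-type) inequality, used to prove sub-Gaussian concentration. -/

section Framework

variable {ι : Type*} [Fintype ι] [DecidableEq ι]

/-- Product weight on `ι → Bool`. -/
def Wt (w : Bool → ℝ) (ω : ι → Bool) : ℝ := ∏ i, w (ω i)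

/-- Expectation with respect to the product weight. -/
def Ex (w : Bool → ℝ) (f : (ι → Bool) → ℝ) : ℝ := ∑ ω, Wt w ω * f ω

/-- `f` depends only on the coordinates in `A`. -/
def DepOn (f : (ι → Bool) → ℝ) (A : Finset ι) : Prop :=
  ∀ ω ω', (∀ i ∈ A, ω i = ω' i) → f ω = f ω'

lemma Wt_nonneg {w : Bool → ℝ} (hw0 : ∀ b, 0 ≤ w b) (ω : ι → Bool) : 0 ≤ Wt w ω :=
  Finset.prod_nonneg fun _ _ => hw0 _

lemma sum_Wt {w : Bool → ℝ} (hw1 : w true + w false = 1) :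
    ∑ ω : ι → Bool, Wt w ω = 1 := by
  have h : ∏ _i : ι, ∑ b : Bool, w b = ∑ ω : ι → Bool, ∏ i, w (ω i) :=
    Fintype.prod_sum (ι := ι) (κ := fun _ => Bool) (fun _ b => w b)
  show ∑ ω : ι → Bool, ∏ i, w (ω i) = 1
  rw [← h, show (∑ b : Bool, w b) = 1 from by rw [Fintype.sum_bool, hw1]]
  simp

lemma Ex_const {w : Bool → ℝ} (hw1 : w true + w false = 1) (c : ℝ) :
    Ex (ι := ι) w (fun _ => c) = c := by
  show (∑ ω : ι → Bool, Wt w ω * c) = c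
  rw [← Finset.sum_mul, sum_Wt hw1, one_mul]

/-- The splitting map: glue a value at coordinate `i` with the rest. -/
def σω (i : ι) (b : Bool) (ρ : {j // j ≠ i} → Bool) : ι → Bool :=
  (Equiv.funSplitAt i Bool).symm (b, ρ)

lemma σω_same (i : ι) (b : Bool) (ρ : {j // j ≠ i} → Bool) : σω i b ρ i = b := by
  simp [σω, Equiv.funSplitAt, Equiv.piSplitAt]

lemma σω_ne (i : ι) {j : ι} (h : j ≠ i) (b : Bool) (ρ : {j // j ≠ i} → Bool) :
    σω i b ρ j = ρ ⟨j, h⟩ := by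
  simp [σω, Equiv.funSplitAt, Equiv.piSplitAt, h]

lemma update_σω (i : ι) (b b' : Bool) (ρ : {j // j ≠ i} → Bool) :
    Function.update (σω i b ρ) i b' = σω i b' ρ := by
  funext j
  rcases eq_or_ne j i with rfl | h
  · rw [Function.update_self, σω_same]
  · rw [Function.update_of_ne h, σω_ne i h, σω_ne i h]

lemma sum_split (i : ι) (F : (ι → Bool) → ℝ) :
    ∑ ω, F ω = ∑ ρ : {j // j ≠ i} → Bool, ∑ b, F (σω i b ρ) := by
  rw [← Equiv.sum_comp (Equiv.funSplitAt i Bool).symm F, Fintype.sum_prod_type]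
  exact Finset.sum_comm

lemma Wt_σω (w : Bool → ℝ) (i : ι) (b : Bool) (ρ : {j // j ≠ i} → Bool) :
    Wt w (σω i b ρ) = w b * ∏ j, w (ρ j) := by
  unfold Wt
  rw [← Finset.prod_erase_mul Finset.univ _ (Finset.mem_univ i), σω_same]
  rw [Finset.prod_subtype (p := fun j => j ≠ i) (Finset.univ.erase i)
    (fun x => by simp [Finset.mem_erase]) (fun j => w (σω i b ρ j))]
  rw [mul_comm]
  congr 1
  exact Finset.prod_congr rfl fun j _ => by rw [σω_ne i j.2]

lemma Ex_split (w : Bool → ℝ) (i : ι) (F : (ι → Bool) → ℝ) :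
    Ex w F = ∑ ρ : {j // j ≠ i} → Bool,
      (∏ j, w (ρ j)) * ∑ b, w b * F (σω i b ρ) := by
  unfold Ex
  rw [sum_split i (fun ω => Wt w ω * F ω)]
  refine Finset.sum_congr rfl fun ρ _ => ?_
  rw [Finset.mul_sum]
  exact Finset.sum_congr rfl fun b _ => by rw [Wt_σω]; ring

lemma Ex_update_avg {w : Bool → ℝ} (hw1 : w true + w false = 1) (i : ι)
    (H : (ι → Bool) → ℝ) :
    Ex w (fun ω => ∑ b, w b * H (Function.update ω i b)) = Ex w H := by
  rw [Ex_split w i, Ex_split w i H]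
  refine Finset.sum_congr rfl fun ρ _ => ?_
  congr 1
  have hupd : ∀ b' b, Function.update (σω i b' ρ) i b = σω i b ρ := fun b' b => update_σω i b' b ρ
  calc ∑ b', w b' * ∑ b, w b * H (Function.update (σω i b' ρ) i b)
      = ∑ b', w b' * ∑ b, w b * H (σω i b ρ) := by
        refine Finset.sum_congr rfl fun b' _ => ?_
        congr 1
        exact Finset.sum_congr rfl fun b _ => by rw [hupd]
    _ = (∑ b' : Bool, w b') * ∑ b, w b * H (σω i b ρ) := by rw [Finset.sum_mul]
    _ = ∑ b, w b * H (σω i b ρ) := by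
        rw [Fintype.sum_bool, hw1, one_mul]

lemma cs_bool {w : Bool → ℝ} (hw0 : ∀ b, 0 ≤ w b) (x y : Bool → ℝ)
    (hx : ∀ b, 0 ≤ x b) (hy : ∀ b, 0 ≤ y b) :
    ∑ b, w b * (x b * y b) ≤
      Real.sqrt (∑ b, w b * (x b)^2) * Real.sqrt (∑ b, w b * (y b)^2) := by
  have h := Finset.sum_mul_sq_le_sq_mul_sq Finset.univ
    (fun b => Real.sqrt (w b) * x b) (fun b => Real.sqrt (w b) * y b)
  have e1 : ∀ b : Bool, (Real.sqrt (w b) * x b) * (Real.sqrt (w b) * y b) = w b * (x b * y b) := by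
    intro b
    rw [show (Real.sqrt (w b) * x b) * (Real.sqrt (w b) * y b)
        = (Real.sqrt (w b) * Real.sqrt (w b)) * (x b * y b) from by ring,
      Real.mul_self_sqrt (hw0 b)]
  have e2 : ∀ (z : Bool → ℝ) (b : Bool), (Real.sqrt (w b) * z b)^2 = w b * (z b)^2 := by
    intro z b; rw [mul_pow, Real.sq_sqrt (hw0 b)]
  simp only [e1, e2] at h
  have hL : 0 ≤ ∑ b, w b * (x b * y b) :=
    Finset.sum_nonneg fun b _ => mul_nonneg (hw0 b) (mul_nonneg (hx b) (hy b))
  have hA : 0 ≤ ∑ b, w b * (x b)^2 :=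
    Finset.sum_nonneg fun b _ => mul_nonneg (hw0 b) (sq_nonneg _)
  calc ∑ b, w b * (x b * y b) = Real.sqrt ((∑ b, w b * (x b * y b))^2) :=
        (Real.sqrt_sq hL).symm
    _ ≤ Real.sqrt ((∑ b, w b * (x b)^2) * ∑ b, w b * (y b)^2) := Real.sqrt_le_sqrt h
    _ = _ := Real.sqrt_mul hA _

lemma cs_one {w : Bool → ℝ} (hw0 : ∀ b, 0 ≤ w b) (hw1 : w true + w false = 1)
    (x : Bool → ℝ) (hx : ∀ b, 0 ≤ x b) :
    ∑ b, w b * x b ≤ Real.sqrt (∑ b, w b * (x b)^2) := by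
  have h := cs_bool hw0 x (fun _ => 1) hx (fun _ => zero_le_one)
  have h1 : ∑ b : Bool, w b * (1:ℝ)^2 = 1 := by
    simp [Fintype.sum_bool, hw1]
  rw [h1, Real.sqrt_one, mul_one] at h
  simpa using h

lemma claim2 {w : Bool → ℝ} (hw0 : ∀ b, 0 ≤ w b) (hw1 : w true + w false = 1)
    {α : Type*} [DecidableEq α] (T : Finset α) (hT : T.card ≤ 2)
    (h : α → Bool → ℝ) (hh : ∀ v b, 0 ≤ h v b) :
    ∑ b, w b * ∏ v ∈ T, h v b ≤ ∏ v ∈ T, Real.sqrt (∑ b, w b * (h v b)^2) := by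
  obtain hc | hc | hc : T.card = 0 ∨ T.card = 1 ∨ T.card = 2 := by omega
  · rw [Finset.card_eq_zero.1 hc]
    simp [Fintype.sum_bool]
    rw [hw1]  -- might already be closed
  · obtain ⟨a, rfl⟩ := Finset.card_eq_one.1 hc
    simp only [Finset.prod_singleton]
    exact cs_one hw0 hw1 _ (hh a)
  · obtain ⟨a, b', hab, rfl⟩ := Finset.card_eq_two.1 hc
    rw [Finset.prod_pair hab]
    have := cs_bool hw0 (h a) (h b') (hh a) (hh b')
    calc ∑ b, w b * ∏ v ∈ ({a, b'} : Finset α), h v b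
        = ∑ b, w b * (h a b * h b' b) := by
          refine Finset.sum_congr rfl fun b _ => ?_
          rw [Finset.prod_pair hab]
      _ ≤ _ := this

end Framework

section Finner

set_option linter.unusedSectionVars false

/-- **Read-2 Finner-type inequality.** If each coordinate is read by at most two of the
nonnegative functions `g v`, then the expectation of the product is at most the product
of the `L²`-norms. -/
theorem finner {ι α : Type*} [Fintype ι] [DecidableEq ι] [DecidableEq α]
    (w : Bool → ℝ) (hw0 : ∀ b, 0 ≤ w b) (hw1 : w true + w false = 1)
    (s : Finset ι) (V : Finset α) (g : α → (ι → Bool) → ℝ) (A : α → Finset ι)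
    (hg0 : ∀ v ω, 0 ≤ g v ω)
    (hdep : ∀ v, DepOn (g v) (A v))
    (hsub : ∀ v, A v ⊆ s)
    (hread : ∀ i : ι, (V.filter fun v => i ∈ A v).card ≤ 2) :
    Ex w (fun ω => ∏ v ∈ V, g v ω) ≤ ∏ v ∈ V, Real.sqrt (Ex w (fun ω => (g v ω)^2)) := by
  classical
  induction s using Finset.induction_on generalizing g A with
  | empty =>
    have hconst : ∀ v ω, g v ω = g v (fun _ => true) := fun v ω =>
      hdep v ω _ (fun i hi => absurd (hsub v hi) (by simp))
    have h1 : Ex w (fun ω => ∏ v ∈ V, g v ω) = ∏ v ∈ V, g v (fun _ => true) := by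
      have he : (fun ω => ∏ v ∈ V, g v ω) = fun _ => ∏ v ∈ V, g v (fun _ => true) := by
        funext ω; exact Finset.prod_congr rfl fun v _ => hconst v ω
      rw [he, Ex_const hw1]
    rw [h1]
    refine Finset.prod_le_prod (fun v _ => hg0 v _) (fun v hv => ?_)
    have h2 : Ex w (fun ω => (g v ω)^2) = (g v (fun _ => true))^2 := by
      have he : (fun ω => (g v ω)^2) = fun _ => (g v (fun _ => true))^2 := by
        funext ω; rw [hconst v ω]
      rw [he, Ex_const hw1]
    rw [h2, Real.sqrt_sq (hg0 v _)]
  | @insert i s' hins ih =>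
    set g' : α → (ι → Bool) → ℝ := fun v ω =>
      if i ∈ A v then Real.sqrt (∑ b, w b * (g v (Function.update ω i b))^2) else g v ω
      with hg'def
    set A' : α → Finset ι := fun v => (A v).erase i with hA'def
    have hg'0 : ∀ v ω, 0 ≤ g' v ω := by
      intro v ω
      by_cases h : i ∈ A v
      · simp only [hg'def, if_pos h]; exact Real.sqrt_nonneg _
      · simp only [hg'def, if_neg h]; exact hg0 v ω
    have hdep' : ∀ v, DepOn (g' v) (A' v) := by
      intro v ω ω' hagree
      by_cases h : i ∈ A v
      · simp only [hg'def, if_pos h]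
        congr 1
        refine Finset.sum_congr rfl fun b _ => ?_
        have := hdep v (Function.update ω i b) (Function.update ω' i b) (fun j hj => ?_)
        · rw [this]
        rcases eq_or_ne j i with rfl | hji
        · rw [Function.update_self, Function.update_self]
        · rw [Function.update_of_ne hji, Function.update_of_ne hji]
          exact hagree j (Finset.mem_erase.2 ⟨hji, hj⟩)
      · simp only [hg'def, if_neg h]
        exact hdep v ω ω' fun j hj =>
          hagree j (Finset.mem_erase.2 ⟨fun e => h (e ▸ hj), hj⟩)
    have hsub' : ∀ v, A' v ⊆ s' := by
      intro v j hj
      rcases Finset.mem_erase.1 hj with ⟨hji, hjA⟩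
      rcases Finset.mem_insert.1 (hsub v hjA) with rfl | h
      · exact absurd rfl hji
      · exact h
    have hread' : ∀ i', (V.filter fun v => i' ∈ A' v).card ≤ 2 := by
      intro i'
      refine le_trans (Finset.card_le_card ?_) (hread i')
      intro v hv
      rcases Finset.mem_filter.1 hv with ⟨h1, h2⟩
      exact Finset.mem_filter.2 ⟨h1, (Finset.mem_erase.1 h2).2⟩
    have hEx2 : ∀ v, Ex w (fun ω => (g' v ω)^2) = Ex w (fun ω => (g v ω)^2) := by
      intro v
      by_cases h : i ∈ A v
      · have hpt : ∀ ω, (g' v ω)^2 = ∑ b, w b * (g v (Function.update ω i b))^2 := by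
          intro ω
          simp only [hg'def, if_pos h]
          exact Real.sq_sqrt (Finset.sum_nonneg fun b _ => mul_nonneg (hw0 b) (sq_nonneg _))
        have he : (fun ω => (g' v ω)^2)
            = fun ω => ∑ b, w b * ((fun ω' => (g v ω')^2) (Function.update ω i b)) := by
          funext ω; exact hpt ω
        rw [he, Ex_update_avg hw1 i (fun ω' => (g v ω')^2)]
      · simp only [hg'def, if_neg h]
    have key : Ex w (fun ω => ∏ v ∈ V, g v ω) ≤ Ex w (fun ω => ∏ v ∈ V, g' v ω) := by
      rw [Ex_split w i, Ex_split w i]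
      refine Finset.sum_le_sum fun ρ _ => ?_
      have hP : (0:ℝ) ≤ ∏ j, w (ρ j) := Finset.prod_nonneg fun _ _ => hw0 _
      refine mul_le_mul_of_nonneg_left ?_ hP
      have hg'i : ∀ v b, g' v (σω i b ρ) = g' v (σω i true ρ) := by
        intro v b
        refine hdep' v _ _ fun j hj => ?_
        have hji : j ≠ i := (Finset.mem_erase.1 hj).1
        rw [σω_ne i hji, σω_ne i hji]
      have hRHS : ∑ b, w b * ∏ v ∈ V, g' v (σω i b ρ) = ∏ v ∈ V, g' v (σω i true ρ) := by
        have hb : ∀ b, ∏ v ∈ V, g' v (σω i b ρ) = ∏ v ∈ V, g' v (σω i true ρ) :=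
          fun b => Finset.prod_congr rfl fun v _ => hg'i v b
        calc ∑ b, w b * ∏ v ∈ V, g' v (σω i b ρ)
            = ∑ b : Bool, w b * ∏ v ∈ V, g' v (σω i true ρ) := by
              refine Finset.sum_congr rfl fun b _ => ?_; rw [hb]
          _ = (∑ b : Bool, w b) * ∏ v ∈ V, g' v (σω i true ρ) := by rw [Finset.sum_mul]
          _ = _ := by rw [Fintype.sum_bool, hw1, one_mul]
      rw [hRHS]
      have hnotR : ∀ v ∈ V.filter (fun v => ¬ i ∈ A v), ∀ b,
          g v (σω i b ρ) = g v (σω i true ρ) := by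
        intro v hv b
        have hvi : i ∉ A v := (Finset.mem_filter.1 hv).2
        refine hdep v _ _ fun j hj => ?_
        have hji : j ≠ i := fun e => hvi (e ▸ hj)
        rw [σω_ne i hji, σω_ne i hji]
      calc ∑ b, w b * ∏ v ∈ V, g v (σω i b ρ)
          = (∏ v ∈ V.filter (fun v => ¬ i ∈ A v), g v (σω i true ρ)) *
              ∑ b, w b * ∏ v ∈ V.filter (fun v => i ∈ A v), g v (σω i b ρ) := by
            rw [Finset.mul_sum]
            refine Finset.sum_congr rfl fun b _ => ?_
            rw [← Finset.prod_filter_mul_prod_filter_not V (fun v => i ∈ A v)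
              (fun v => g v (σω i b ρ))]
            have hnr : ∏ v ∈ V.filter (fun v => ¬ i ∈ A v), g v (σω i b ρ)
                = ∏ v ∈ V.filter (fun v => ¬ i ∈ A v), g v (σω i true ρ) :=
              Finset.prod_congr rfl fun v hv => hnotR v hv b
            rw [hnr]; ring
        _ ≤ (∏ v ∈ V.filter (fun v => ¬ i ∈ A v), g v (σω i true ρ)) *
              ∏ v ∈ V.filter (fun v => i ∈ A v),
                Real.sqrt (∑ b, w b * (g v (σω i b ρ))^2) := by
            refine mul_le_mul_of_nonneg_left ?_
              (Finset.prod_nonneg fun v _ => hg0 v _)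
            exact claim2 hw0 hw1 _ (hread i) (fun v b => g v (σω i b ρ)) (fun v b => hg0 v _)
        _ = ∏ v ∈ V, g' v (σω i true ρ) := by
            rw [← Finset.prod_filter_mul_prod_filter_not V (fun v => i ∈ A v)
              (fun v => g' v (σω i true ρ))]
            have h1 : ∏ v ∈ V.filter (fun v => i ∈ A v), g' v (σω i true ρ)
                = ∏ v ∈ V.filter (fun v => i ∈ A v),
                    Real.sqrt (∑ b, w b * (g v (σω i b ρ))^2) := by
              refine Finset.prod_congr rfl fun v hv => ?_
              have hvi : i ∈ A v := (Finset.mem_filter.1 hv).2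
              simp only [hg'def, if_pos hvi]
              congr 1
              exact Finset.sum_congr rfl fun b _ => by rw [update_σω]
            have h2 : ∏ v ∈ V.filter (fun v => ¬ i ∈ A v), g' v (σω i true ρ)
                = ∏ v ∈ V.filter (fun v => ¬ i ∈ A v), g v (σω i true ρ) := by
              refine Finset.prod_congr rfl fun v hv => ?_
              have hvi : i ∉ A v := (Finset.mem_filter.1 hv).2
              simp only [hg'def, if_neg hvi]
            rw [h1, h2, mul_comm]
    calc Ex w (fun ω => ∏ v ∈ V, g v ω) ≤ Ex w (fun ω => ∏ v ∈ V, g' v ω) := key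
      _ ≤ ∏ v ∈ V, Real.sqrt (Ex w fun ω => (g' v ω)^2) := ih g' A' hg'0 hdep' hsub' hread'
      _ = ∏ v ∈ V, Real.sqrt (Ex w fun ω => (g v ω)^2) :=
          Finset.prod_congr rfl fun v _ => by rw [hEx2 v]

end Finner

section Concentration

variable {ι : Type*} [Fintype ι] [DecidableEq ι]

lemma exp_chord {y : ℝ} (h1 : -1 ≤ y) (h2 : y ≤ 1) (s : ℝ) :
    Real.exp (s * y) ≤ Real.cosh s + y * Real.sinh s := by
  have hc := convexOn_exp.2 (Set.mem_univ s) (Set.mem_univ (-s))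
    (show (0:ℝ) ≤ (1+y)/2 by linarith) (show (0:ℝ) ≤ (1-y)/2 by linarith)
    (show (1+y)/2 + (1-y)/2 = 1 by ring)
  simp only [smul_eq_mul] at hc
  have harg : (1+y)/2 * s + (1-y)/2 * (-s) = s * y := by ring
  rw [harg] at hc
  rw [Real.cosh_eq, Real.sinh_eq]
  calc Real.exp (s * y) ≤ (1+y)/2 * Real.exp s + (1-y)/2 * Real.exp (-s) := hc
    _ = (Real.exp s + Real.exp (-s))/2 + y * ((Real.exp s - Real.exp (-s))/2) := by ring

lemma mgf_single {w : Bool → ℝ} (hw0 : ∀ b, 0 ≤ w b) (hw1 : w true + w false = 1)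
    (f : (ι → Bool) → ℝ) (h0 : ∀ ω, 0 ≤ f ω) (h1 : ∀ ω, f ω ≤ 1) (s : ℝ) :
    Ex w (fun ω => Real.exp (s * (f ω - Ex w f))) ≤ Real.exp (s^2/2) := by
  set q := Ex w f with hq
  have hq0 : 0 ≤ q := Finset.sum_nonneg fun ω _ => mul_nonneg (Wt_nonneg hw0 ω) (h0 ω)
  have hq1 : q ≤ 1 := by
    have hle : Ex w f ≤ Ex (ι := ι) w (fun _ => 1) :=
      Finset.sum_le_sum fun ω _ => mul_le_mul_of_nonneg_left (h1 ω) (Wt_nonneg hw0 ω)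
    rwa [Ex_const hw1] at hle
  have hpt : ∀ ω, Real.exp (s * (f ω - q)) ≤ Real.cosh s + (f ω - q) * Real.sinh s :=
    fun ω => exp_chord (by linarith [h0 ω]) (by linarith [h1 ω]) s
  have step1 : Ex w (fun ω => Real.exp (s * (f ω - q)))
      ≤ Ex w (fun ω => Real.cosh s + (f ω - q) * Real.sinh s) :=
    Finset.sum_le_sum fun ω _ => mul_le_mul_of_nonneg_left (hpt ω) (Wt_nonneg hw0 ω)
  have step2 : Ex w (fun ω => Real.cosh s + (f ω - q) * Real.sinh s) = Real.cosh s := by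
    show (∑ ω : ι → Bool, Wt w ω * (Real.cosh s + (f ω - q) * Real.sinh s)) = _
    have expand : ∀ ω : ι → Bool, Wt w ω * (Real.cosh s + (f ω - q) * Real.sinh s)
        = Real.cosh s * Wt w ω + Real.sinh s * (Wt w ω * f ω) - q * Real.sinh s * Wt w ω := by
      intro ω; ring
    calc (∑ ω : ι → Bool, Wt w ω * (Real.cosh s + (f ω - q) * Real.sinh s))
        = ∑ ω : ι → Bool, (Real.cosh s * Wt w ω + Real.sinh s * (Wt w ω * f ω)
            - q * Real.sinh s * Wt w ω) := Finset.sum_congr rfl fun ω _ => expand ω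
      _ = Real.cosh s * (∑ ω : ι → Bool, Wt w ω)
          + Real.sinh s * (∑ ω : ι → Bool, Wt w ω * f ω)
          - q * Real.sinh s * (∑ ω : ι → Bool, Wt w ω) := by
          rw [Finset.sum_sub_distrib, Finset.sum_add_distrib, ← Finset.mul_sum,
            ← Finset.mul_sum, ← Finset.mul_sum]
      _ = Real.cosh s := by
          rw [sum_Wt hw1]
          have hsum : (∑ ω : ι → Bool, Wt w ω * f ω) = q := by rw [hq]; rfl
          rw [hsum]; ring
  calc Ex w (fun ω => Real.exp (s * (f ω - q))) ≤ Real.cosh s := le_trans step1 (le_of_eq step2)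
    _ ≤ Real.exp (s^2/2) := Real.cosh_le_exp_half_sq s

end Concentration

section Concentration2

variable {ι : Type*} [Fintype ι] [DecidableEq ι]

set_option linter.unusedSectionVars false

lemma mgf_sum {α : Type*} [Fintype α] [DecidableEq α]
    {w : Bool → ℝ} (hw0 : ∀ b, 0 ≤ w b) (hw1 : w true + w false = 1)
    (f : α → (ι → Bool) → ℝ) (A : α → Finset ι)
    (h0 : ∀ v ω, 0 ≤ f v ω) (h1 : ∀ v ω, f v ω ≤ 1)
    (hdep : ∀ v, DepOn (f v) (A v))
    (hread : ∀ i : ι, ((Finset.univ : Finset α).filter fun v => i ∈ A v).card ≤ 2)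
    (s : ℝ) :
    Ex w (fun ω => Real.exp (s * (∑ v, (f v ω - Ex w (f v)))))
      ≤ Real.exp ((Fintype.card α) * s^2) := by
  have hg : ∀ ω, Real.exp (s * ∑ v, (f v ω - Ex w (f v)))
      = ∏ v, Real.exp (s * (f v ω - Ex w (f v))) := by
    intro ω; rw [Finset.mul_sum, Real.exp_sum]
  have hEe : (fun ω => Real.exp (s * (∑ v, (f v ω - Ex w (f v)))))
      = fun ω => ∏ v, Real.exp (s * (f v ω - Ex w (f v))) := funext hg
  rw [hEe]
  have hfin := finner w hw0 hw1 Finset.univ Finset.univ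
    (fun v ω => Real.exp (s * (f v ω - Ex w (f v)))) A
    (fun v ω => (Real.exp_pos _).le)
    (fun v ω ω' hag => by simp only []; rw [hdep v ω ω' hag])
    (fun v => Finset.subset_univ _) hread
  refine le_trans hfin ?_
  have hterm : ∀ v : α, Real.sqrt (Ex w fun ω => (Real.exp (s * (f v ω - Ex w (f v))))^2)
      ≤ Real.exp (s^2) := by
    intro v
    have hsq : (fun ω => (Real.exp (s * (f v ω - Ex w (f v))))^2)
        = fun ω => Real.exp ((2*s) * (f v ω - Ex w (f v))) := by
      funext ω
      rw [sq, ← Real.exp_add]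
      congr 1; ring
    have hEx : Ex w (fun ω => (Real.exp (s * (f v ω - Ex w (f v))))^2)
        ≤ Real.exp (2 * s^2) := by
      rw [hsq]
      have := mgf_single hw0 hw1 (f v) (h0 v) (h1 v) (2*s)
      calc Ex w (fun ω => Real.exp ((2*s) * (f v ω - Ex w (f v))))
          ≤ Real.exp ((2*s)^2/2) := this
        _ = Real.exp (2 * s^2) := by congr 1; ring
    calc Real.sqrt (Ex w fun ω => (Real.exp (s * (f v ω - Ex w (f v))))^2)
        ≤ Real.sqrt (Real.exp (2 * s^2)) := Real.sqrt_le_sqrt hEx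
      _ = Real.exp (s^2) := by
          rw [show (2:ℝ) * s^2 = s^2 + s^2 from by ring, Real.exp_add,
            Real.sqrt_mul_self (Real.exp_pos _).le]
          
  calc ∏ v, Real.sqrt (Ex w fun ω => (Real.exp (s * (f v ω - Ex w (f v))))^2)
      ≤ ∏ _v : α, Real.exp (s^2) :=
        Finset.prod_le_prod (fun v _ => Real.sqrt_nonneg _) (fun v _ => hterm v)
    _ = Real.exp ((Fintype.card α) * s^2) := by
        rw [Finset.prod_const, ← Real.exp_nat_mul, Finset.card_univ]

lemma markov_exp {w : Bool → ℝ} (hw0 : ∀ b, 0 ≤ w b)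
    (Y : (ι → Bool) → ℝ) (t s : ℝ) (hs : 0 ≤ s) :
    ∑ ω ∈ Finset.univ.filter (fun ω => t ≤ Y ω), Wt w ω
      ≤ Real.exp (-(s*t)) * Ex w (fun ω => Real.exp (s * Y ω)) := by
  calc ∑ ω ∈ Finset.univ.filter (fun ω => t ≤ Y ω), Wt w ω
      ≤ ∑ ω ∈ Finset.univ.filter (fun ω => t ≤ Y ω), Wt w ω * Real.exp (s * (Y ω - t)) := by
        refine Finset.sum_le_sum fun ω hω => ?_
        have hYt : t ≤ Y ω := (Finset.mem_filter.1 hω).2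
        have h1 : (1:ℝ) ≤ Real.exp (s * (Y ω - t)) := by
          have hnn : 0 ≤ s * (Y ω - t) := mul_nonneg hs (by linarith)
          nlinarith [Real.add_one_le_exp (s * (Y ω - t))]
        nlinarith [Wt_nonneg hw0 ω]
    _ ≤ ∑ ω : ι → Bool, Wt w ω * Real.exp (s * (Y ω - t)) := by
        refine Finset.sum_le_sum_of_subset_of_nonneg (Finset.filter_subset _ _) ?_
        intro ω _ _
        exact mul_nonneg (Wt_nonneg hw0 ω) (Real.exp_pos _).le
    _ = Real.exp (-(s*t)) * Ex w (fun ω => Real.exp (s * Y ω)) := by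
        show _ = Real.exp (-(s*t)) * ∑ ω : ι → Bool, Wt w ω * Real.exp (s * Y ω)
        rw [Finset.mul_sum]
        refine Finset.sum_congr rfl fun ω _ => ?_
        rw [show s * (Y ω - t) = (-(s*t)) + s * Y ω from by ring, Real.exp_add]
        ring

lemma union_abs {w : Bool → ℝ} (hw0 : ∀ b, 0 ≤ w b) (Y : (ι → Bool) → ℝ) (t : ℝ) :
    ∑ ω ∈ Finset.univ.filter (fun ω => t ≤ |Y ω|), Wt w ω
      ≤ (∑ ω ∈ Finset.univ.filter (fun ω => t ≤ Y ω), Wt w ω)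
        + ∑ ω ∈ Finset.univ.filter (fun ω => t ≤ -(Y ω)), Wt w ω := by
  classical
  have hsub : Finset.univ.filter (fun ω => t ≤ |Y ω|)
      ⊆ (Finset.univ.filter fun ω => t ≤ Y ω) ∪ (Finset.univ.filter fun ω => t ≤ -(Y ω)) := by
    intro ω hω
    rcases le_abs.1 (Finset.mem_filter.1 hω).2 with h | h
    · exact Finset.mem_union_left _ (Finset.mem_filter.2 ⟨Finset.mem_univ _, h⟩)
    · exact Finset.mem_union_right _ (Finset.mem_filter.2 ⟨Finset.mem_univ _, h⟩)
  have h1 : ∑ ω ∈ Finset.univ.filter (fun ω => t ≤ |Y ω|), Wt w ω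
      ≤ ∑ ω ∈ ((Finset.univ.filter fun ω => t ≤ Y ω) ∪ (Finset.univ.filter fun ω => t ≤ -(Y ω))),
          Wt w ω :=
    Finset.sum_le_sum_of_subset_of_nonneg hsub (fun ω _ _ => Wt_nonneg hw0 ω)
  have h2 := Finset.sum_union_inter (s₁ := Finset.univ.filter fun ω => t ≤ Y ω)
    (s₂ := Finset.univ.filter fun ω => t ≤ -(Y ω)) (f := Wt w)
  have h3 : (0:ℝ) ≤ ∑ ω ∈ ((Finset.univ.filter fun ω => t ≤ Y ω) ∩ (Finset.univ.filter fun ω => t ≤ -(Y ω))), Wt w ω :=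
    Finset.sum_nonneg fun ω _ => Wt_nonneg hw0 ω
  linarith

/-- Two-sided sub-Gaussian tail bound for a read-2 sum of `[0,1]`-valued functions. -/
lemma tail_bound {α : Type*} [Fintype α] [DecidableEq α]
    {w : Bool → ℝ} (hw0 : ∀ b, 0 ≤ w b) (hw1 : w true + w false = 1)
    (f : α → (ι → Bool) → ℝ) (A : α → Finset ι)
    (h0 : ∀ v ω, 0 ≤ f v ω) (h1 : ∀ v ω, f v ω ≤ 1)
    (hdep : ∀ v, DepOn (f v) (A v))
    (hread : ∀ i : ι, ((Finset.univ : Finset α).filter fun v => i ∈ A v).card ≤ 2)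
    (t : ℝ) (ht : 0 ≤ t) (hcard : 0 < Fintype.card α) :
    ∑ ω ∈ Finset.univ.filter
        (fun ω => t ≤ |(∑ v, f v ω) - ∑ v, Ex w (f v)|), Wt w ω
      ≤ 2 * Real.exp (-(t^2) / (4 * Fintype.card α)) := by
  classical
  set m : ℝ := (Fintype.card α : ℝ) with hm
  have hm0 : (0:ℝ) < m := by rw [hm]; exact_mod_cast hcard
  set s : ℝ := t / (2 * m) with hs
  have hs0 : 0 ≤ s := div_nonneg ht (by linarith)
  set Y : (ι → Bool) → ℝ := fun ω => (∑ v, f v ω) - ∑ v, Ex w (f v) with hY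
  have hYsum : ∀ ω, Y ω = ∑ v, (f v ω - Ex w (f v)) := by
    intro ω; rw [hY]; rw [Finset.sum_sub_distrib]
  have hup : ∑ ω ∈ Finset.univ.filter (fun ω => t ≤ Y ω), Wt w ω
      ≤ Real.exp (m * s^2 - s * t) := by
    calc ∑ ω ∈ Finset.univ.filter (fun ω => t ≤ Y ω), Wt w ω
        ≤ Real.exp (-(s*t)) * Ex w (fun ω => Real.exp (s * Y ω)) :=
          markov_exp hw0 Y t s hs0
      _ ≤ Real.exp (-(s*t)) * Real.exp (m * s^2) := by
          refine mul_le_mul_of_nonneg_left ?_ (Real.exp_pos _).le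
          have he : (fun ω => Real.exp (s * Y ω))
              = fun ω => Real.exp (s * (∑ v, (f v ω - Ex w (f v)))) := by
            funext ω; rw [hYsum ω]
          rw [he]
          exact mgf_sum hw0 hw1 f A h0 h1 hdep hread s
      _ = Real.exp (m * s^2 - s * t) := by rw [← Real.exp_add]; congr 1; ring
  have hlo : ∑ ω ∈ Finset.univ.filter (fun ω => t ≤ -(Y ω)), Wt w ω
      ≤ Real.exp (m * s^2 - s * t) := by
    calc ∑ ω ∈ Finset.univ.filter (fun ω => t ≤ -(Y ω)), Wt w ω
        ≤ Real.exp (-(s*t)) * Ex w (fun ω => Real.exp (s * -(Y ω))) :=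
          markov_exp hw0 (fun ω => -(Y ω)) t s hs0
      _ ≤ Real.exp (-(s*t)) * Real.exp (m * s^2) := by
          refine mul_le_mul_of_nonneg_left ?_ (Real.exp_pos _).le
          have he : (fun ω => Real.exp (s * -(Y ω)))
              = fun ω => Real.exp ((-s) * (∑ v, (f v ω - Ex w (f v)))) := by
            funext ω; rw [hYsum ω]; congr 1; ring
          rw [he]
          have := mgf_sum hw0 hw1 f A h0 h1 hdep hread (-s)
          calc Ex w (fun ω => Real.exp ((-s) * (∑ v, (f v ω - Ex w (f v)))))
              ≤ Real.exp ((Fintype.card α) * (-s)^2) := this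
            _ = Real.exp (m * s^2) := by rw [hm]; congr 1; ring
      _ = Real.exp (m * s^2 - s * t) := by rw [← Real.exp_add]; congr 1; ring
  have hexp : m * s^2 - s * t = -(t^2) / (4 * m) := by
    rw [hs]; field_simp; ring
  have := union_abs hw0 Y t
  calc ∑ ω ∈ Finset.univ.filter (fun ω => t ≤ |Y ω|), Wt w ω
      ≤ (∑ ω ∈ Finset.univ.filter (fun ω => t ≤ Y ω), Wt w ω)
        + ∑ ω ∈ Finset.univ.filter (fun ω => t ≤ -(Y ω)), Wt w ω := this
    _ ≤ 2 * Real.exp (-(t^2) / (4 * m)) := by rw [← hexp]; linarith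

end Concentration2

section Bridge

/-- The weight function of the Bernoulli measure. -/
def wB (p : ℝ) : Bool → ℝ := fun b => if b then p else 1 - p

lemma wB_nonneg {p : ℝ} (hp0 : 0 ≤ p) (hp1 : p ≤ 1) : ∀ b, 0 ≤ wB p b := by
  intro b; cases b <;> simp [wB] <;> linarith

lemma wB_sum (p : ℝ) : wB p true + wB p false = 1 := by simp [wB]

lemma bern_singleton {p : ℝ} (b : Bool) :
    bern p {b} = ENNReal.ofReal (wB p b) := by
  cases b <;>
    simp [bern, wB, Measure.dirac_apply' _ (measurableSet_singleton _),
      Set.indicator_of_mem, Set.indicator_of_notMem]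

lemma bern_prob {p : ℝ} (hp0 : 0 ≤ p) (hp1 : p ≤ 1) : IsProbabilityMeasure (bern p) := by
  constructor
  have : (Set.univ : Set Bool) = {true} ∪ {false} := by
    ext b; cases b <;> simp
  rw [this, measure_union (by simp) (measurableSet_singleton _),
    bern_singleton, bern_singleton, ← ENNReal.ofReal_add (by simpa [wB] using hp0) (by simp [wB]; linarith)]
  rw [wB_sum]
  simp

variable {n : ℕ}

lemma gnp_singleton {p : ℝ} (hp0 : 0 ≤ p) (hp1 : p ≤ 1) (ω : Sym2 (Fin n) → Bool) :
    gnp n p {ω} = ENNReal.ofReal (Wt (wB p) ω) := by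
  rw [gnp, ← Set.univ_pi_singleton ω, Measure.pi_pi]
  rw [Wt, ENNReal.ofReal_prod_of_nonneg (fun e _ => wB_nonneg hp0 hp1 (ω e))]
  exact Finset.prod_congr rfl fun e _ => bern_singleton (ω e)

lemma gnp_finset {p : ℝ} (hp0 : 0 ≤ p) (hp1 : p ≤ 1) (F : Finset (Sym2 (Fin n) → Bool)) :
    (gnp n p ↑F).toReal = ∑ ω ∈ F, Wt (wB p) ω := by
  have hset : (↑F : Set (Sym2 (Fin n) → Bool)) = ⋃ ω ∈ F, {ω} := by
    ext x; simp
  rw [hset, measure_biUnion_finset ?disj (fun ω _ => measurableSet_singleton ω)]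
  · rw [ENNReal.toReal_sum (fun ω _ => by rw [gnp_singleton hp0 hp1]; exact ENNReal.ofReal_ne_top)]
    exact Finset.sum_congr rfl fun ω _ => by
      rw [gnp_singleton hp0 hp1, ENNReal.toReal_ofReal (Wt_nonneg (wB_nonneg hp0 hp1) ω)]
  case disj =>
    intro x _ y _ hxy
    simp only [Set.disjoint_singleton_left, Set.mem_singleton_iff]
    exact hxy

lemma gnp_integral {p : ℝ} (hp0 : 0 ≤ p) (hp1 : p ≤ 1) (f : (Sym2 (Fin n) → Bool) → ℝ) :
    ∫ ω, f ω ∂(gnp n p) = ∑ ω, Wt (wB p) ω * f ω := by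
  haveI : IsProbabilityMeasure (bern p) := bern_prob hp0 hp1
  haveI : IsProbabilityMeasure (gnp n p) := by
    rw [gnp]; infer_instance
  rw [MeasureTheory.integral_fintype Integrable.of_finite]
  refine Finset.sum_congr rfl fun ω _ => ?_
  show ((gnp n p) {ω}).toReal • f ω = _
  rw [gnp_singleton hp0 hp1, ENNReal.toReal_ofReal (Wt_nonneg (wB_nonneg hp0 hp1) ω),
    smul_eq_mul]

end Bridge

section Application

variable {n : ℕ}

/-- The day-1 colour indicator of vertex `v`. -/
def Iv (C1 : Finset (Fin n)) (v : Fin n) (ω : Sym2 (Fin n) → Bool) : ℝ :=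
  if bcolour C1 ω 1 v = true then 1 else 0

/-- The set of potential edges incident to `v`. -/
def Av (v : Fin n) : Finset (Sym2 (Fin n)) := Finset.univ.filter fun e => v ∈ e

lemma Iv_nonneg (C1 : Finset (Fin n)) (v : Fin n) (ω : Sym2 (Fin n) → Bool) :
    0 ≤ Iv C1 v ω := by
  unfold Iv; split <;> norm_num

lemma Iv_le_one (C1 : Finset (Fin n)) (v : Fin n) (ω : Sym2 (Fin n) → Bool) :
    Iv C1 v ω ≤ 1 := by
  unfold Iv; split <;> norm_num

lemma bcolour_one_congr (C1 : Finset (Fin n)) (ω ω' : Sym2 (Fin n) → Bool) (v : Fin n)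
    (h : ∀ u : Fin n, ω s(v, u) = ω' s(v, u)) :
    bcolour C1 ω 1 v = bcolour C1 ω' 1 v := by
  have hnb : nbhd ω v = nbhd ω' v := by
    unfold nbhd
    refine Finset.filter_congr fun u _ => ?_
    unfold Adj
    rw [h u]
  show bcolour C1 ω (0 + 1) v = bcolour C1 ω' (0 + 1) v
  simp only [bcolour, hnb]
  rfl

lemma Iv_depOn (C1 : Finset (Fin n)) (v : Fin n) : DepOn (Iv C1 v) (Av v) := by
  intro ω ω' hagree
  unfold Iv
  rw [bcolour_one_congr C1 ω ω' v fun u => hagree s(v, u)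
    (by simp [Av, Sym2.mem_mk_left])]

lemma Av_read2 (e : Sym2 (Fin n)) :
    ((Finset.univ : Finset (Fin n)).filter fun v => e ∈ Av v).card ≤ 2 := by
  induction e using Sym2.ind with
  | _ a b =>
    have hsub : ((Finset.univ : Finset (Fin n)).filter fun v => s(a,b) ∈ Av v)
        ⊆ {a, b} := by
      intro v hv
      have hm : v ∈ s(a, b) := by
        have := (Finset.mem_filter.1 hv).2
        simpa [Av] using this
      rcases Sym2.mem_iff.1 hm with rfl | rfl
      · exact Finset.mem_insert_self _ _
      · exact Finset.mem_insert_of_mem (Finset.mem_singleton_self _)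
    calc ((Finset.univ : Finset (Fin n)).filter fun v => s(a,b) ∈ Av v).card
        ≤ ({a, b} : Finset (Fin n)).card := Finset.card_le_card hsub
      _ ≤ 2 := by
          refine le_trans (Finset.card_insert_le _ _) ?_
          simp

lemma bC1card_eq_sum (C1 : Finset (Fin n)) (ω : Sym2 (Fin n) → Bool) :
    (bC1card C1 ω 1 : ℝ) = ∑ v, Iv C1 v ω := by
  unfold bC1card Iv
  rw [Finset.card_filter]
  push_cast
  exact Finset.sum_congr rfl fun v _ => by split <;> norm_num

end Application

lemma exp_quarter_sq (z : ℝ) (hz : 0 ≤ z) : z^2/4 ≤ Real.exp z := by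
  have h := Real.add_one_le_exp (z/2)
  have hsplit : Real.exp z = Real.exp (z/2) * Real.exp (z/2) := by
    rw [← Real.exp_add]; congr 1; ring
  nlinarith [Real.exp_pos (z/2)]

set_option maxHeartbeats 1000000 in
/-- Consider biased majority dynamics on `G(n,p)` with an arbitrary
initial partition, and `Δ = ||C_{1,0}| - |C_{2,0}||/2`.  For all constants `D, 𝒟 > 0`
there is a constant `Ĉ > 0` such that for all sufficiently large `n`, if
`(log n)/n ≤ p ≤ 1/4`, `Δ ≤ 10/p` and `Δ ≥ (1/√p)·exp(Ĉ·√(log(1/p)))`, then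
`P(| |C_{1,1}| - E[|C_{1,1}|] | ≥ D·√(pn)·Δ) ≤ 1/√(np(1-p)) + 𝒟·p·Δ`. -/
theorem statement_6 (D D' : ℝ) (hD : 0 < D) (hD' : 0 < D') :
    ∃ C > (0:ℝ), ∃ N : ℕ, ∀ (n : ℕ), N ≤ n →
      ∀ (p Δ : ℝ) (C1 : Finset (Fin n)),
        Δ = |(C1.card : ℝ) - (C1ᶜ.card : ℝ)| / 2 →
        Real.log n / n ≤ p → p ≤ 1/4 → Δ ≤ 10 / p →
        (1 / Real.sqrt p) * Real.exp (C * Real.sqrt (Real.log (1 / p))) ≤ Δ →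
        (gnp n p {ω | D * Real.sqrt (p * n) * Δ ≤
            |(bC1card C1 ω 1 : ℝ) -
              ∫ ω', (bC1card C1 ω' 1 : ℝ) ∂(gnp n p)|}).toReal ≤
          1 / Real.sqrt (n * p * (1 - p)) + D' * p * Δ := by
  classical
  set K' : ℝ := Real.log 2 + max 0 (Real.log (1 / D')) + 1/2 with hK'def
  set C : ℝ := max 1 (2 * Real.sqrt K' / D) with hCdef
  clear_value K' C
  have hK'pos : 0 < K' := by
    have h2 : (0:ℝ) < Real.log 2 := Real.log_pos (by norm_num)
    have h3 : (0:ℝ) ≤ max 0 (Real.log (1 / D')) := le_max_left _ _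
    rw [hK'def]; linarith
  have hC1 : (1:ℝ) ≤ C := by rw [hCdef]; exact le_max_left _ _
  have hC0 : (0:ℝ) < C := lt_of_lt_of_le one_pos hC1
  have hCK : K' ≤ D^2/4 * C^2 := by
    have h1 : 2 * Real.sqrt K' / D ≤ C := by rw [hCdef]; exact le_max_right _ _
    have h2 : 2 * Real.sqrt K' ≤ C * D := (div_le_iff₀ hD).1 h1
    have h3 : (2 * Real.sqrt K') * (2 * Real.sqrt K') ≤ (C * D) * (C * D) :=
      mul_self_le_mul_self (by positivity) h2
    have h4 : Real.sqrt K' * Real.sqrt K' = K' := Real.mul_self_sqrt hK'pos.le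
    nlinarith
  refine ⟨C, hC0, 3, ?_⟩
  intro n hn p Δ C1 hΔdef hplow hphigh hΔub hΔlb
  -- basic positivity facts
  have hnR : (3:ℝ) ≤ (n:ℝ) := by exact_mod_cast hn
  have hn0 : (0:ℝ) < (n:ℝ) := by linarith
  have hp0 : 0 < p := by
    have hlogn : (0:ℝ) < Real.log n := Real.log_pos (by linarith)
    have : (0:ℝ) < Real.log n / n := div_pos hlogn hn0
    linarith
  have hp1 : p ≤ 1 := by linarith
  have hsp : 0 < Real.sqrt p := Real.sqrt_pos.2 hp0
  set L : ℝ := Real.log (1 / p) with hLdef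
  set a : ℝ := Real.exp (C * Real.sqrt L) with hadef
  set u : ℝ := Real.sqrt p * Δ with hudef
  clear_value L a u
  have hL1 : (1:ℝ) ≤ L := by
    have h4 : (4:ℝ) ≤ 1 / p := by
      rw [le_div_iff₀ hp0]; linarith
    have he4 : Real.exp 1 ≤ 4 :=
      le_of_lt (lt_trans Real.exp_one_lt_d9 (by norm_num))
    rw [hLdef]
    calc (1:ℝ) = Real.log (Real.exp 1) := (Real.log_exp 1).symm
      _ ≤ Real.log (1 / p) := by
          apply Real.log_le_log (Real.exp_pos 1)
          linarith
  have hL0 : (0:ℝ) ≤ L := by linarith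
  have ha1 : (1:ℝ) ≤ a := by
    have hnn : (0:ℝ) ≤ C * Real.sqrt L := mul_nonneg hC0.le (Real.sqrt_nonneg _)
    have h := Real.add_one_le_exp (C * Real.sqrt L)
    rw [hadef]; linarith
  have hΔ0 : 0 < Δ := by
    have hpos : (0:ℝ) < 1 / Real.sqrt p * a := by positivity
    linarith
  have hu : a ≤ u := by
    rw [hudef]
    calc a = Real.sqrt p * (1 / Real.sqrt p * a) := by field_simp
      _ ≤ Real.sqrt p * Δ := mul_le_mul_of_nonneg_left hΔlb hsp.le
  have hu0 : 0 < u := lt_of_lt_of_le (lt_of_lt_of_le one_pos ha1) hu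
  have hpss : Real.sqrt p * Real.sqrt p = p := Real.mul_self_sqrt hp0.le
  -- √p = exp(-(L/2))
  have hsqp : Real.sqrt p = Real.exp (-(L/2)) := by
    have hlogp : Real.log p = -L := by
      rw [hLdef, one_div, Real.log_inv]; ring
    have hpexp : p = Real.exp (-L) := by
      rw [← hlogp, Real.exp_log hp0]
    have hsq : Real.exp (-(L/2)) ^ 2 = Real.exp (-L) := by
      rw [sq, ← Real.exp_add]; congr 1; ring
    rw [hpexp, ← hsq, Real.sqrt_sq (Real.exp_pos _).le]
  -- lower bound on a²
  have haL : C^2 * L ≤ a^2 := by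
    have hz : (0:ℝ) ≤ 2*C*Real.sqrt L := by positivity
    have hq := exp_quarter_sq (2*C*Real.sqrt L) hz
    have ha2 : a^2 = Real.exp (2*C*Real.sqrt L) := by
      rw [hadef, sq, ← Real.exp_add]; congr 1; ring
    have hsqL : Real.sqrt L ^ 2 = L := Real.sq_sqrt hL0
    calc C^2 * L = (2*C*Real.sqrt L)^2/4 := by
          rw [mul_pow, mul_pow, hsqL]; ring
      _ ≤ Real.exp (2*C*Real.sqrt L) := hq
      _ = a^2 := ha2.symm
  -- the main exponential inequality: 2·exp(-(D²a²)/4) ≤ D'·exp(-(L/2))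
  have hmain : 2 * Real.exp (-(D^2 * a^2)/4) ≤ D' * Real.exp (-(L/2)) := by
    have hKa : K' * L ≤ D^2 * a^2 / 4 := by
      calc K' * L ≤ (D^2/4 * C^2) * L := mul_le_mul_of_nonneg_right hCK hL0
        _ = D^2/4 * (C^2 * L) := by ring
        _ ≤ D^2/4 * a^2 := mul_le_mul_of_nonneg_left haL (by positivity)
        _ = D^2 * a^2 / 4 := by ring
    have hlog : Real.log 2 + Real.log (1/D') ≤ D^2 * a^2/4 - L/2 := by
      have hmax : Real.log (1/D') ≤ max 0 (Real.log (1/D')) := le_max_right _ _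
      have hcoef : (0:ℝ) ≤ Real.log 2 + max 0 (Real.log (1 / D')) := by
        have h2 := Real.log_pos (show (1:ℝ) < 2 by norm_num)
        have h3 := le_max_left (0:ℝ) (Real.log (1 / D'))
        linarith
      have hKL : K' * L - L/2 = (Real.log 2 + max 0 (Real.log (1 / D'))) * L := by
        rw [hK'def]; ring
      have h5 : (Real.log 2 + max 0 (Real.log (1 / D'))) * 1
          ≤ (Real.log 2 + max 0 (Real.log (1 / D'))) * L :=
        mul_le_mul_of_nonneg_left hL1 hcoef
      have h6 : Real.log 2 + Real.log (1/D')
          ≤ (Real.log 2 + max 0 (Real.log (1 / D'))) * 1 := by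
        rw [mul_one]; linarith
      linarith
    have h7 : (2:ℝ) * (1/D') ≤ Real.exp (D^2 * a^2/4 - L/2) := by
      calc (2:ℝ) * (1/D') = Real.exp (Real.log 2 + Real.log (1/D')) := by
            rw [Real.exp_add, Real.exp_log (by norm_num : (0:ℝ) < 2),
              Real.exp_log (by positivity : (0:ℝ) < 1/D')]
        _ ≤ Real.exp (D^2 * a^2/4 - L/2) := Real.exp_le_exp.2 hlog
    have h8 : Real.exp (D^2 * a^2/4 - L/2)
        = Real.exp (D^2 * a^2/4) * Real.exp (-(L/2)) := by
      rw [← Real.exp_add]; congr 1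
    have h9 : 2 * (1/D') ≤ Real.exp (D^2 * a^2/4) * Real.exp (-(L/2)) := by
      rw [← h8]; exact h7
    have h10 : Real.exp (-(D^2 * a^2)/4) * Real.exp (D^2 * a^2/4) = 1 := by
      rw [← Real.exp_add,
        show -(D^2 * a^2)/4 + D^2 * a^2/4 = 0 from by ring, Real.exp_zero]
    have hepos := Real.exp_pos (-(D^2 * a^2)/4)
    have h11 := mul_le_mul_of_nonneg_left h9 (mul_pos hD' hepos).le
    have h12 : D' * Real.exp (-(D^2 * a^2)/4) * (2 * (1/D'))
        = 2 * Real.exp (-(D^2 * a^2)/4) := by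
      field_simp
    have h13 : D' * Real.exp (-(D^2 * a^2)/4)
          * (Real.exp (D^2 * a^2/4) * Real.exp (-(L/2)))
        = D' * Real.exp (-(L/2)) := by
      calc D' * Real.exp (-(D^2 * a^2)/4)
            * (Real.exp (D^2 * a^2/4) * Real.exp (-(L/2)))
          = D' * (Real.exp (-(D^2 * a^2)/4) * Real.exp (D^2 * a^2/4))
            * Real.exp (-(L/2)) := by ring
        _ = D' * Real.exp (-(L/2)) := by rw [h10]; ring
    linarith
  -- probability side
  set w := wB p with hwdef
  have hw0 : ∀ b, 0 ≤ w b := wB_nonneg hp0.le hp1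
  have hw1 : w true + w false = 1 := wB_sum p
  set t : ℝ := D * Real.sqrt (p * ↑n) * Δ with htdef
  have ht0 : (0:ℝ) ≤ t := by
    rw [htdef]; positivity
  have hint : ∫ ω', ((bC1card C1 ω' 1 : ℕ) : ℝ) ∂(gnp n p) = ∑ v, Ex w (Iv C1 v) := by
    rw [hwdef, gnp_integral hp0.le hp1]
    calc ∑ ω, Wt (wB p) ω * ((bC1card C1 ω 1 : ℕ) : ℝ)
        = ∑ ω, ∑ v, Wt (wB p) ω * Iv C1 v ω := by
          refine Finset.sum_congr rfl fun ω _ => ?_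
          rw [bC1card_eq_sum, Finset.mul_sum]
      _ = ∑ v, ∑ ω, Wt (wB p) ω * Iv C1 v ω := Finset.sum_comm
      _ = ∑ v, Ex (wB p) (Iv C1 v) := rfl
  set F : Finset (Sym2 (Fin n) → Bool) :=
    Finset.univ.filter (fun ω => t ≤ |(∑ v, Iv C1 v ω) - ∑ v, Ex w (Iv C1 v)|) with hFdef
  have hevent : {ω : Sym2 (Fin n) → Bool | D * Real.sqrt (p * ↑n) * Δ ≤
      |((bC1card C1 ω 1 : ℕ) : ℝ) - ∫ ω', ((bC1card C1 ω' 1 : ℕ) : ℝ) ∂(gnp n p)|}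
      = ↑F := by
    ext ω
    simp only [Set.mem_setOf_eq, hFdef, Finset.coe_filter, Finset.mem_univ, true_and]
    rw [bC1card_eq_sum, hint, htdef]
  have hcard : 0 < Fintype.card (Fin n) := by
    rw [Fintype.card_fin]; omega
  have htail : ∑ ω ∈ F, Wt w ω ≤ 2 * Real.exp (-(t^2) / (4 * Fintype.card (Fin n))) := by
    rw [hFdef]
    exact tail_bound hw0 hw1 (Iv C1) Av (Iv_nonneg C1) (Iv_le_one C1)
      (Iv_depOn C1) Av_read2 t ht0 hcard
  have hexp_eq : -(t^2) / (4 * (Fintype.card (Fin n) : ℝ)) = -(D^2 * u^2)/4 := by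
    have hsq : Real.sqrt (p * ↑n) ^ 2 = p * n := Real.sq_sqrt (by positivity)
    have ht2 : t^2 = D^2 * u^2 * n := by
      rw [htdef, hudef, mul_pow (D * Real.sqrt (p * ↑n)) Δ,
        mul_pow D (Real.sqrt (p * ↑n)), hsq, mul_pow (Real.sqrt p) Δ,
        Real.sq_sqrt hp0.le]
      ring
    rw [Fintype.card_fin, ht2]
    field_simp
  have hfinal : 2 * Real.exp (-(D^2 * u^2)/4) ≤ D' * p * Δ := by
    have hau : a^2 ≤ u^2 := by
      have h0a : (0:ℝ) ≤ a := by linarith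
      exact pow_le_pow_left₀ h0a hu 2
    have hDau : (0:ℝ) ≤ D^2 * (u^2 - a^2) := mul_nonneg (sq_nonneg D) (by linarith)
    have hmono : Real.exp (-(D^2 * u^2)/4) ≤ Real.exp (-(D^2 * a^2)/4) := by
      apply Real.exp_le_exp.2
      linarith
    have hpΔ : D' * p * Δ = D' * Real.exp (-(L/2)) * u := by
      rw [hudef, ← hsqp]
      calc D' * p * Δ = D' * (Real.sqrt p * Real.sqrt p) * Δ := by rw [hpss]
        _ = D' * Real.sqrt p * (Real.sqrt p * Δ) := by ring
    rw [hpΔ]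
    have h1u : (1:ℝ) ≤ u := le_trans ha1 hu
    have hpos : (0:ℝ) < D' * Real.exp (-(L/2)) := by positivity
    calc 2 * Real.exp (-(D^2 * u^2)/4) ≤ 2 * Real.exp (-(D^2 * a^2)/4) := by linarith
      _ ≤ D' * Real.exp (-(L/2)) := hmain
      _ = D' * Real.exp (-(L/2)) * 1 := by ring
      _ ≤ D' * Real.exp (-(L/2)) * u := mul_le_mul_of_nonneg_left h1u hpos.le
  have hrhs0 : (0:ℝ) ≤ 1 / Real.sqrt (↑n * p * (1 - p)) := by positivity
  calc (gnp n p {ω | D * Real.sqrt (p * ↑n) * Δ ≤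
      |((bC1card C1 ω 1 : ℕ) : ℝ) - ∫ ω', ((bC1card C1 ω' 1 : ℕ) : ℝ) ∂(gnp n p)|}).toReal
      = (gnp n p ↑F).toReal := by rw [hevent]
    _ = ∑ ω ∈ F, Wt (wB p) ω := gnp_finset hp0.le hp1 F
    _ ≤ 2 * Real.exp (-(t^2) / (4 * Fintype.card (Fin n))) := by rw [← hwdef]; exact htail
    _ = 2 * Real.exp (-(D^2 * u^2)/4) := by rw [hexp_eq]
    _ ≤ D' * p * Δ := hfinal
    _ ≤ 1 / Real.sqrt (↑n * p * (1 - p)) + D' * p * Δ := by linarith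

end MD
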